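/- Let X be uniformly distributed on 𝒳={1,…,K}, let p(y|x)=μ if y=x and ε otherwise with μ>ε>0 and μ+(K−1)ε=1, let 1<α<2, and let f:𝒳→{1,…,M} be any encoder with all M cells A_z=f⁻¹(z) nonempty. Then I^Q(X;(Y,Z)) = K^{α−2}·ε·Σ_{z=1}^M q(|A_z|) ≤ K^{α−1}·ε·[ ( K/M + (μ/ε)^α − 1 ) / ( K/M + μ/ε − 1 )^{α−1} + (M−1)·(K/M)^{2−α} ], where q(m)= m(m+(μ/ε)^α−1)(m+μ/ε−1)^{1−α} + (K−m)m^{2−α}, with equality whenever all cells have size K/M. -/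

import Mathlib

private lemma hasDerivAt_shift_rpow {c t : ℝ} (p q : ℝ) (h : t + c ≠ 0) (hpq : p - 1 = q) :
    HasDerivAt (fun x : ℝ => (x + c) ^ p) (p * (t + c) ^ q) t := by
  subst hpq
  simpa [Function.comp_def] using
    (Real.hasDerivAt_rpow_const (x := t + c) (p := p) (Or.inl h)).comp t
      ((hasDerivAt_id t).add_const c)

private lemma hasDerivAt_rpow'' {t : ℝ} (p q : ℝ) (h : t ≠ 0) (hpq : p - 1 = q) :
    HasDerivAt (fun x : ℝ => x ^ p) (p * t ^ q) t := by
  subst hpq; exact Real.hasDerivAt_rpow_const (Or.inl h)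

private lemma concave_aux (KK a b α : ℝ) (hα1 : 1 < α) (hα2 : α < 2)
    (hb : 0 < b) (hba : b ≤ a) :
    ConcaveOn ℝ (Set.Icc 1 KK) (fun t : ℝ =>
      (t + b) ^ (3 - α) + (a - 2*b) * (t + b) ^ (2 - α)
        + (b^2 - a*b) * (t + b) ^ (1 - α) + KK * t ^ (2 - α) - t ^ (3 - α)) := by
  have h2α : (0:ℝ) < 2 - α := by linarith
  have hα1' : (0:ℝ) < α - 1 := by linarith
  have hd1 : ∀ t : ℝ, 0 < t → HasDerivAt (fun t : ℝ =>
      (t + b) ^ (3 - α) + (a - 2*b) * (t + b) ^ (2 - α)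
        + (b^2 - a*b) * (t + b) ^ (1 - α) + KK * t ^ (2 - α) - t ^ (3 - α))
      ((3-α) * (t + b)^(2-α) + (a-2*b) * ((2-α) * (t+b)^(1-α))
        + (b^2-a*b) * ((1-α) * (t+b)^(-α)) + KK * ((2-α) * t^(1-α))
        - (3-α) * t^(2-α)) t := by
    intro t ht
    have htb : t + b ≠ 0 := by positivity
    exact ((((hasDerivAt_shift_rpow (3-α) (2-α) htb (by ring)).add
        ((hasDerivAt_shift_rpow (2-α) (1-α) htb (by ring)).const_mul (a-2*b))).add
        ((hasDerivAt_shift_rpow (1-α) (-α) htb (by ring)).const_mul (b^2-a*b))).add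
        ((hasDerivAt_rpow'' (2-α) (1-α) ht.ne' (by ring)).const_mul KK)).sub
        (hasDerivAt_rpow'' (3-α) (2-α) ht.ne' (by ring))
  have hd2 : ∀ t : ℝ, 0 < t → HasDerivAt (fun t : ℝ =>
      (3-α) * (t + b)^(2-α) + (a-2*b) * ((2-α) * (t+b)^(1-α))
        + (b^2-a*b) * ((1-α) * (t+b)^(-α)) + KK * ((2-α) * t^(1-α))
        - (3-α) * t^(2-α))
      ((3-α) * ((2-α) * (t+b)^(1-α)) + (a-2*b) * ((2-α) * ((1-α) * (t+b)^(-α)))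
        + (b^2-a*b) * ((1-α) * ((-α) * (t+b)^(-α-1))) + KK * ((2-α) * ((1-α) * t^(-α)))
        - (3-α) * ((2-α) * t^(1-α))) t := by
    intro t ht
    have htb : t + b ≠ 0 := by positivity
    exact (((((hasDerivAt_shift_rpow (2-α) (1-α) htb (by ring)).const_mul (3-α)).add
        (((hasDerivAt_shift_rpow (1-α) (-α) htb (by ring)).const_mul (2-α)).const_mul (a-2*b))).add
        (((hasDerivAt_shift_rpow (-α) (-α-1) htb (by ring)).const_mul (1-α)).const_mul (b^2-a*b))).add
        (((hasDerivAt_rpow'' (1-α) (-α) ht.ne' (by ring)).const_mul (2-α)).const_mul KK)).sub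
        ((hasDerivAt_rpow'' (2-α) (1-α) ht.ne' (by ring)).const_mul (3-α))
  refine concaveOn_of_hasDerivWithinAt2_nonpos (convex_Icc 1 KK)
    (f' := fun t => (3-α) * (t + b)^(2-α) + (a-2*b) * ((2-α) * (t+b)^(1-α))
        + (b^2-a*b) * ((1-α) * (t+b)^(-α)) + KK * ((2-α) * t^(1-α))
        - (3-α) * t^(2-α))
    (f'' := fun t => (3-α) * ((2-α) * (t+b)^(1-α)) + (a-2*b) * ((2-α) * ((1-α) * (t+b)^(-α)))
        + (b^2-a*b) * ((1-α) * ((-α) * (t+b)^(-α-1))) + KK * ((2-α) * ((1-α) * t^(-α)))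
        - (3-α) * ((2-α) * t^(1-α)))
    (fun t ht => ((hd1 t (by have := ht.1; linarith)).continuousAt).continuousWithinAt)
    (fun t ht => by
      rw [interior_Icc] at ht
      exact (hd1 t (by have := ht.1; linarith)).hasDerivWithinAt)
    (fun t ht => by
      rw [interior_Icc] at ht
      exact (hd2 t (by have := ht.1; linarith)).hasDerivWithinAt) ?_
  intro t ht
  rw [interior_Icc] at ht
  obtain ⟨ht1, htK⟩ := ht
  have ht0 : (0:ℝ) < t := by linarith
  have hs0 : (0:ℝ) < t + b := by linarith
  have erw1 : ∀ (x : ℝ), 0 < x → ∀ p q : ℝ, p + 1 = q → x ^ q = x * x ^ p := by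
    intro x hx p q h
    rw [← h, Real.rpow_add hx, Real.rpow_one, mul_comm]
  have eb1 : (t+b)^(-α) = (t+b) * (t+b)^(-α-1) := erw1 _ hs0 _ _ (by ring)
  have eb2 : (t+b)^(1-α) = (t+b) * ((t+b) * (t+b)^(-α-1)) := by
    rw [erw1 _ hs0 (-α) (1-α) (by ring), eb1]
  have et1 : t^(1-α) = t * t^(-α) := erw1 _ ht0 _ _ (by ring)
  have hS : (0:ℝ) < (t+b)^(-α-1) := Real.rpow_pos_of_pos hs0 _
  have hT : (0:ℝ) < t^(-α) := Real.rpow_pos_of_pos ht0 _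
  have hST : (t+b)^(1-α) ≤ t^(1-α) :=
    Real.rpow_le_rpow_of_nonpos ht0 (by linarith) (by linarith)
  rw [eb2, et1] at hST
  have hB2 : (3-α)*(2-α)*((t+b)*(t+b)) + (a-2*b)*((2-α)*((1-α)*(t+b)))
      + (b^2-a*b)*((1-α)*(-α)) ≤ 2*(2-α)*((t+b)*(t+b)) := by
    nlinarith [mul_nonneg (mul_nonneg hα1'.le h2α.le) (mul_pos ht0 ht0).le,
      mul_nonneg (mul_nonneg hα1'.le h2α.le)
        (mul_nonneg (le_trans hb.le hba) ht0.le),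
      mul_nonneg hα1'.le (mul_nonneg hb.le (sub_nonneg.2 hba))]
  rw [eb1, eb2, et1]
  nlinarith [mul_le_mul_of_nonneg_right hB2 hS.le,
    mul_le_mul_of_nonneg_left hST (by positivity : (0:ℝ) ≤ 2*(2-α)),
    mul_nonneg (mul_nonneg (mul_nonneg h2α.le hα1'.le) hT.le) (sub_nonneg.2 htK.le)]

private lemma cell_value (K' μ ε α : ℝ) (hK : 0 < K') (hε : 0 < ε) (hεμ : ε < μ)
    (m : ℝ) (hm : 1 ≤ m) :
    m * ((1/K')*μ*(((1/K')*(μ+(m-1)*ε))/μ)^(1-α)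
      + (m-1)*((1/K')*ε*(((1/K')*(μ+(m-1)*ε))/ε)^(1-α))
      + (K'-m)*((1/K')*ε*(((1/K')*(m*ε))/ε)^(1-α)))
    = K'^(α-2) * ε * (m*(m+(μ/ε)^α-1)*(m+μ/ε-1)^(1-α) + (K'-m)*m^(2-α)) := by
  have hμ : 0 < μ := hε.trans hεμ
  have hr1 : 1 < μ/ε := (one_lt_div hε).2 hεμ
  have hm0 : (0:ℝ) < m := by linarith
  have hX : (0:ℝ) < m + μ/ε - 1 := by linarith
  have h1 : (1/K')*(μ+(m-1)*ε)/μ = (ε*(m+μ/ε-1))/(K'*μ) := by field_simp; ring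
  have h2 : (1/K')*(μ+(m-1)*ε)/ε = (ε*(m+μ/ε-1))/(K'*ε) := by field_simp; ring
  have h3 : (1/K')*(m*ε)/ε = m/K' := by field_simp
  rw [h1, h2, h3,
    Real.div_rpow (by positivity) (by positivity),
    Real.div_rpow (by positivity) (by positivity),
    Real.div_rpow hm0.le hK.le,
    Real.mul_rpow hε.le hX.le, Real.mul_rpow hK.le hμ.le,
    Real.mul_rpow hK.le hε.le]
  have split1 : ∀ x : ℝ, 0 < x → x^(1-α) = x/x^α := by
    intro x hx
    rw [show (1-α) = 1 - α from rfl, Real.rpow_sub hx, Real.rpow_one]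
  have split2 : m^(2-α) = m*m/m^α := by
    rw [Real.rpow_sub hm0, show (2:ℝ) = 1+1 by norm_num, Real.rpow_add hm0, Real.rpow_one]
  have split3 : K'^(α-2) = K'^α/(K'*K') := by
    rw [Real.rpow_sub hK, show (2:ℝ) = 1+1 by norm_num, Real.rpow_add hK, Real.rpow_one]
  rw [split1 ε hε, split1 μ hμ, split1 K' hK, split1 m hm0, split2, split3,
    Real.div_rpow hμ.le hε.le]
  have hεα := (Real.rpow_pos_of_pos hε α).ne'
  have hμα := (Real.rpow_pos_of_pos hμ α).ne'
  have hKα := (Real.rpow_pos_of_pos hK α).ne'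
  have hmα := (Real.rpow_pos_of_pos hm0 α).ne'
  generalize (m + μ/ε - 1)^(1-α) = X
  generalize hE : ε^α = E at *
  generalize hMu : μ^α = Mu at *
  generalize hKa : K'^α = Ka at *
  generalize hMa : m^α = Ma at *
  field_simp
  ring

private lemma equal_cells (M' c μ ε α K' : ℝ) (hKc : K' = M' * c)
    (hM : 0 < M') (hc : 0 < c) (hε : 0 < ε) (hεμ : ε < μ) :
    K'^(α-2) * ε * (M' * (c*(c+(μ/ε)^α-1)*(c+μ/ε-1)^(1-α) + (K'-c)*c^(2-α)))
    = K'^(α-1) * ε * ((c+(μ/ε)^α-1)/(c+μ/ε-1)^(α-1) + (M'-1)*c^(2-α)) := by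
  subst hKc
  have hr1 : 1 < μ/ε := (one_lt_div hε).2 hεμ
  have hX : (0:ℝ) < c + μ/ε - 1 := by linarith
  have hK : (0:ℝ) < M' * c := by positivity
  have e1 : (M'*c)^(α-1) = (M'*c)^(α-2) * (M'*c) := by
    rw [show α-1 = (α-2)+1 by ring, Real.rpow_add hK, Real.rpow_one]
  have e2 : (c+μ/ε-1)^(1-α) = ((c+μ/ε-1)^(α-1))⁻¹ := by
    rw [show 1-α = -(α-1) by ring, Real.rpow_neg hX.le]
  rw [e1, e2]
  have hXα := (Real.rpow_pos_of_pos hX (α-1)).ne'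
  field_simp

private lemma qf_to_g (KK r α t : ℝ) (hr : 1 < r) (ht : 1 ≤ t) :
    t*(t + r^α - 1)*(t + r - 1)^(1-α) + (KK - t)*t^(2-α)
    = (t + (r-1))^(3-α) + ((r^α - 1) - 2*(r-1))*(t + (r-1))^(2-α)
      + ((r-1)^2 - (r^α - 1)*(r-1))*(t + (r-1))^(1-α) + KK*t^(2-α) - t^(3-α) := by
  have ht0 : (0:ℝ) < t := by linarith
  have hs0 : (0:ℝ) < t + (r-1) := by linarith
  have erw1 : ∀ (x : ℝ), 0 < x → ∀ p q : ℝ, p + 1 = q → x ^ q = x * x ^ p := by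
    intro x hx p q h
    rw [← h, Real.rpow_add hx, Real.rpow_one, mul_comm]
  have e1 : (t+(r-1))^(2-α) = (t+(r-1)) * (t+(r-1))^(1-α) := erw1 _ hs0 _ _ (by ring)
  have e2 : (t+(r-1))^(3-α) = (t+(r-1)) * ((t+(r-1)) * (t+(r-1))^(1-α)) := by
    rw [erw1 _ hs0 (2-α) (3-α) (by ring), e1]
  have e3 : t^(3-α) = t * t^(2-α) := erw1 _ ht0 _ _ (by ring)
  have e4 : t + r - 1 = t + (r-1) := by ring
  rw [e4, e1, e2, e3]
  ring

/-- For the uniform source, the symmetric channel and `Q(t) = t^{1-α}` with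
`1 < α < 2`: `I^Q(X;(Y,Z)) = K^{α-2} ε Σ_z q(|A_z|)`, this is at most the value
obtained with equal cell sizes `K/M`, with equality when all cells have size `K/M`. -/
theorem stmt_16 (K M : ℕ) (hK : 0 < K) (hM : 0 < M)
    (μ ε : ℝ) (hε : 0 < ε) (hεμ : ε < μ) (hsum : μ + ((K:ℝ) - 1) * ε = 1)
    (α : ℝ) (hα1 : 1 < α) (hα2 : α < 2)
    (f : Fin K → Fin M) (hf : Function.Surjective f)
    (W : Fin K → Fin K → ℝ) (hWdef : ∀ x y, W x y = if y = x then μ else ε)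
    (qf : ℝ → ℝ)
    (hqf : ∀ t : ℝ, qf t = t * (t + (μ/ε) ^ α - 1) * (t + μ/ε - 1) ^ (1 - α)
        + ((K:ℝ) - t) * t ^ (2 - α)) :
    ((∑ x, ∑ y, (1/(K:ℝ)) * W x y *
        ((∑ x' ∈ Finset.univ.filter (fun x' => f x' = f x), (1/(K:ℝ)) * W x' y)
          / W x y) ^ (1 - α))
      = (K:ℝ) ^ (α - 2) * ε *
          ∑ z : Fin M, qf ((Finset.univ.filter (fun x => f x = z)).card))
    ∧ ((K:ℝ) ^ (α - 2) * ε *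
          ∑ z : Fin M, qf ((Finset.univ.filter (fun x => f x = z)).card)
        ≤ (K:ℝ) ^ (α - 1) * ε *
            (((K:ℝ)/(M:ℝ) + (μ/ε) ^ α - 1) / ((K:ℝ)/(M:ℝ) + μ/ε - 1) ^ (α - 1)
              + ((M:ℝ) - 1) * ((K:ℝ)/(M:ℝ)) ^ (2 - α)))
    ∧ ((∀ z : Fin M, ((Finset.univ.filter (fun x => f x = z)).card : ℝ) = (K:ℝ)/(M:ℝ)) →
        (K:ℝ) ^ (α - 2) * ε *
            ∑ z : Fin M, qf ((Finset.univ.filter (fun x => f x = z)).card)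
          = (K:ℝ) ^ (α - 1) * ε *
              (((K:ℝ)/(M:ℝ) + (μ/ε) ^ α - 1) / ((K:ℝ)/(M:ℝ) + μ/ε - 1) ^ (α - 1)
                + ((M:ℝ) - 1) * ((K:ℝ)/(M:ℝ)) ^ (2 - α))) := by
  classical
  have hμ : 0 < μ := hε.trans hεμ
  have hK0 : (0:ℝ) < K := by exact_mod_cast hK
  have hM0 : (0:ℝ) < M := by exact_mod_cast hM
  have hr1 : 1 < μ/ε := (one_lt_div hε).2 hεμ
  set N : Fin M → ℕ := fun z => (Finset.univ.filter (fun x => f x = z)).card with hN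
  have hNz : ∀ z : Fin M, (Finset.univ.filter (fun x => f x = z)).card = N z := fun z => rfl
  simp only [hNz]
  have hN1 : ∀ z, 1 ≤ N z := by
    intro z
    obtain ⟨x, hx⟩ := hf z
    exact Finset.card_pos.2 ⟨x, by simp [hN, hx]⟩
  have hNK : ∀ z, N z ≤ K := by
    intro z
    calc N z ≤ (Finset.univ : Finset (Fin K)).card := Finset.card_filter_le _ _
      _ = K := by simp
  have hsumN : ∑ z, N z = K := by
    have h := Finset.card_eq_sum_card_fiberwise
      (f := f) (s := Finset.univ) (t := Finset.univ) (fun x _ => Finset.mem_univ (f x))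
    simpa [hN] using h.symm
  have hMK : M ≤ K := by
    have := Fintype.card_le_of_surjective f hf
    simpa using this
  have hc1 : 1 ≤ (K:ℝ)/(M:ℝ) := (one_le_div hM0).2 (by exact_mod_cast hMK)
  have hcK : (K:ℝ)/(M:ℝ) ≤ (K:ℝ) := by
    rw [div_le_iff₀ hM0]
    nlinarith [hK0, hM0, (by exact_mod_cast hM : (1:ℝ) ≤ M)]
  have hKMc : (K:ℝ) = (M:ℝ) * ((K:ℝ)/(M:ℝ)) := by field_simp
  -- equal-cells identity
  have heq : (K:ℝ)^(α-2) * ε * ((M:ℝ) * qf ((K:ℝ)/(M:ℝ)))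
      = (K:ℝ) ^ (α - 1) * ε *
          (((K:ℝ)/(M:ℝ) + (μ/ε) ^ α - 1) / ((K:ℝ)/(M:ℝ) + μ/ε - 1) ^ (α - 1)
            + ((M:ℝ) - 1) * ((K:ℝ)/(M:ℝ)) ^ (2 - α)) := by
    rw [hqf]
    exact equal_cells (M:ℝ) ((K:ℝ)/(M:ℝ)) μ ε α (K:ℝ) hKMc hM0 (by linarith) hε hεμ
  -- Part 1
  set c : ℕ → ℝ := fun n =>
      (1/(K:ℝ))*μ*(((1/(K:ℝ))*(μ+((n:ℝ)-1)*ε))/μ)^(1-α)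
      + ((n:ℝ)-1)*((1/(K:ℝ))*ε*(((1/(K:ℝ))*(μ+((n:ℝ)-1)*ε))/ε)^(1-α))
      + ((K:ℝ)-(n:ℝ))*((1/(K:ℝ))*ε*(((1/(K:ℝ))*((n:ℝ)*ε))/ε)^(1-α)) with hc
  have inner_eq : ∀ x : Fin K, (∑ y, (1/(K:ℝ)) * W x y *
        ((∑ x' ∈ Finset.univ.filter (fun x' => f x' = f x), (1/(K:ℝ)) * W x' y)
          / W x y) ^ (1 - α)) = c (N (f x)) := by
    intro x
    set A := Finset.univ.filter (fun x' => f x' = f x) with hA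
    have hxA : x ∈ A := by simp [hA]
    have hcardA : A.card = N (f x) := rfl
    have hn1 : 1 ≤ N (f x) := hN1 _
    have hS : ∀ y, (∑ x' ∈ A, (1/(K:ℝ)) * W x' y)
        = (1/(K:ℝ)) * (if y ∈ A then μ + ((N (f x):ℝ)-1)*ε else (N (f x):ℝ)*ε) := by
      intro y
      rw [← Finset.mul_sum]
      congr 1
      by_cases hy : y ∈ A
      · rw [if_pos hy, ← Finset.add_sum_erase A _ hy, hWdef y y, if_pos rfl]
        have hε' : ∀ x' ∈ A.erase y, W x' y = ε := by
          intro x' hx'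
          rw [hWdef]
          exact if_neg fun h => (Finset.ne_of_mem_erase hx') h.symm
        rw [Finset.sum_congr rfl hε', Finset.sum_const, Finset.card_erase_of_mem hy,
          hcardA, nsmul_eq_mul, Nat.cast_sub hn1, Nat.cast_one]
      · rw [if_neg hy]
        have hε' : ∀ x' ∈ A, W x' y = ε := by
          intro x' hx'
          rw [hWdef]
          exact if_neg (by rintro rfl; exact hy hx')
        rw [Finset.sum_congr rfl hε', Finset.sum_const, hcardA, nsmul_eq_mul]
    simp only [hS]
    have e_x : (1/(K:ℝ)) * W x x *
        ((1/(K:ℝ)) * (if x ∈ A then μ + ((N (f x):ℝ)-1)*ε else (N (f x):ℝ)*ε) / W x x)^(1-α)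
        = (1/(K:ℝ))*μ*(((1/(K:ℝ))*(μ+((N (f x):ℝ)-1)*ε))/μ)^(1-α) := by
      rw [hWdef x x, if_pos rfl, if_pos hxA]
    have e_A : ∀ y ∈ A.erase x, (1/(K:ℝ)) * W x y *
        ((1/(K:ℝ)) * (if y ∈ A then μ + ((N (f x):ℝ)-1)*ε else (N (f x):ℝ)*ε) / W x y)^(1-α)
        = (1/(K:ℝ))*ε*(((1/(K:ℝ))*(μ+((N (f x):ℝ)-1)*ε))/ε)^(1-α) := by
      intro y hy
      rw [hWdef x y, if_neg (Finset.ne_of_mem_erase hy), if_pos (Finset.mem_of_mem_erase hy)]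
    have e_C : ∀ y ∈ Aᶜ, (1/(K:ℝ)) * W x y *
        ((1/(K:ℝ)) * (if y ∈ A then μ + ((N (f x):ℝ)-1)*ε else (N (f x):ℝ)*ε) / W x y)^(1-α)
        = (1/(K:ℝ))*ε*(((1/(K:ℝ))*((N (f x):ℝ)*ε))/ε)^(1-α) := by
      intro y hy
      have hyA : y ∉ A := by simpa using hy
      have hyx : y ≠ x := fun h => hyA (h ▸ hxA)
      rw [hWdef x y, if_neg hyx, if_neg hyA]
    rw [← Finset.sum_add_sum_compl A, ← Finset.add_sum_erase A _ hxA, e_x,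
      Finset.sum_congr rfl e_A, Finset.sum_const, Finset.card_erase_of_mem hxA, hcardA,
      Finset.sum_congr rfl e_C, Finset.sum_const, Finset.card_compl, hcardA,
      nsmul_eq_mul, nsmul_eq_mul, Nat.cast_sub hn1, Nat.cast_one, Fintype.card_fin,
      Nat.cast_sub (hNK (f x))]
  have hz : ∀ z : Fin M, ((N z:ℝ)) * c (N z) = (K:ℝ)^(α-2) * ε * qf ((N z:ℝ)) := by
    intro z
    rw [hqf, hc]
    exact cell_value (K:ℝ) μ ε α hK0 hε hεμ ((N z:ℝ))
      (by exact_mod_cast hN1 z)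
  have part1 : (∑ x, ∑ y, (1/(K:ℝ)) * W x y *
        ((∑ x' ∈ Finset.univ.filter (fun x' => f x' = f x), (1/(K:ℝ)) * W x' y)
          / W x y) ^ (1 - α))
      = (K:ℝ)^(α-2) * ε * ∑ z : Fin M, qf ((N z:ℝ)) := by
    rw [Finset.sum_congr rfl (fun x _ => inner_eq x),
      ← Finset.sum_fiberwise' Finset.univ f (fun z => c (N z))]
    rw [Finset.mul_sum]
    refine Finset.sum_congr rfl fun z _ => ?_
    rw [Finset.sum_const, nsmul_eq_mul]
    have : (Finset.univ.filter (fun x => f x = z)).card = N z := rfl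
    rw [this, hz z]
  -- Jensen / part 2 quantity
  have hba : μ/ε - 1 ≤ (μ/ε)^α - 1 := by
    have h := Real.rpow_le_rpow_of_exponent_le hr1.le hα1.le
    rw [Real.rpow_one] at h
    linarith
  have hg := concave_aux (K:ℝ) ((μ/ε)^α - 1) (μ/ε - 1) α hα1 hα2 (by linarith) hba
  have hqg : ∀ t : ℝ, 1 ≤ t → qf t =
      (t + (μ/ε - 1)) ^ (3 - α) + ((μ/ε)^α - 1 - 2*(μ/ε - 1)) * (t + (μ/ε - 1)) ^ (2 - α)
        + ((μ/ε - 1)^2 - ((μ/ε)^α - 1)*(μ/ε - 1)) * (t + (μ/ε - 1)) ^ (1 - α)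
        + (K:ℝ) * t ^ (2 - α) - t ^ (3 - α) := by
    intro t ht
    rw [hqf]
    exact qf_to_g (K:ℝ) (μ/ε) α t hr1 ht
  set g : ℝ → ℝ := fun t =>
      (t + (μ/ε - 1)) ^ (3 - α) + ((μ/ε)^α - 1 - 2*(μ/ε - 1)) * (t + (μ/ε - 1)) ^ (2 - α)
        + ((μ/ε - 1)^2 - ((μ/ε)^α - 1)*(μ/ε - 1)) * (t + (μ/ε - 1)) ^ (1 - α)
        + (K:ℝ) * t ^ (2 - α) - t ^ (3 - α) with hgdef
  have hjen : ∑ z : Fin M, qf ((N z:ℝ)) ≤ (M:ℝ) * qf ((K:ℝ)/(M:ℝ)) := by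
    have h₁ : ∑ _z : Fin M, ((M:ℝ))⁻¹ = 1 := by
      rw [Finset.sum_const, Finset.card_univ, Fintype.card_fin, nsmul_eq_mul]
      field_simp
    have hmem : ∀ z ∈ (Finset.univ : Finset (Fin M)), ((N z:ℝ)) ∈ Set.Icc (1:ℝ) (K:ℝ) := by
      intro z _
      exact ⟨by exact_mod_cast hN1 z, by exact_mod_cast hNK z⟩
    have hj := hg.le_map_sum (t := Finset.univ) (w := fun _ => ((M:ℝ))⁻¹)
      (p := fun z => ((N z:ℝ))) (fun z _ => by positivity) h₁ hmem
    have hsum' : ∑ z : Fin M, ((M:ℝ))⁻¹ • ((N z:ℝ)) = (K:ℝ)/(M:ℝ) := by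
      simp only [smul_eq_mul]
      rw [← Finset.mul_sum]
      have hcast : ∑ z : Fin M, ((N z:ℝ)) = (K:ℝ) := by
        rw [← Nat.cast_sum, hsumN]
      rw [hcast, inv_mul_eq_div]
    rw [hsum'] at hj
    calc ∑ z : Fin M, qf ((N z:ℝ)) = ∑ z : Fin M, g ((N z:ℝ)) :=
          Finset.sum_congr rfl fun z _ => hqg _ (by exact_mod_cast hN1 z)
      _ = (M:ℝ) * ∑ z : Fin M, ((M:ℝ))⁻¹ • g ((N z:ℝ)) := by
          simp only [smul_eq_mul]
          rw [← Finset.mul_sum, mul_inv_cancel_left₀ hM0.ne']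
      _ ≤ (M:ℝ) * g ((K:ℝ)/(M:ℝ)) := mul_le_mul_of_nonneg_left hj hM0.le
      _ = (M:ℝ) * qf ((K:ℝ)/(M:ℝ)) := by rw [hqg _ hc1]
  refine ⟨part1, ?_, ?_⟩
  · calc (K:ℝ)^(α-2) * ε * ∑ z : Fin M, qf ((N z:ℝ))
        ≤ (K:ℝ)^(α-2) * ε * ((M:ℝ) * qf ((K:ℝ)/(M:ℝ))) := by
          apply mul_le_mul_of_nonneg_left hjen (by positivity)
      _ = _ := heq
  · intro hall
    have hsq : ∑ z : Fin M, qf ((N z:ℝ)) = (M:ℝ) * qf ((K:ℝ)/(M:ℝ)) := by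
      rw [Finset.sum_congr rfl (fun z _ => by rw [hall z])]
      rw [Finset.sum_const, Finset.card_univ, Fintype.card_fin, nsmul_eq_mul]
    rw [hsq, heq]
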